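/- Let n ∈ ℕ and a_1, …, a_n ∈ ℤ/4ℤ, and define the linear function f : {0,1}^n → ℤ/4ℤ by f(x) = Σ_{i=1}^n a_i·x_i (computed in ℤ/4ℤ, with the coordinates x_i ∈ {0,1} regarded as elements of ℤ/4ℤ). Then the integer |N_0(f) − N_2(f)| is either 0 or a power of 2 (i.e., equals 2^k for some k ∈ ℕ), and likewise |N_1(f) − N_3(f)| is either 0 or a power of 2. -/

import Mathlib

open Finset

/-- `Ncount n f c` is the number of 0-1 vectors `x` with `f x = c` in `ℤ/4ℤ`. -/
def Ncount (n : ℕ) (f : (Fin n → Fin 2) → ZMod 4) (c : ZMod 4) : ℕ :=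
  (Finset.univ.filter fun x => f x = c).card

namespace Stmt0Aux

abbrev GI := GaussianInt

def myI : GI := ⟨0, 1⟩

def chi (c : ZMod 4) : GI := myI ^ c.val

lemma chi_add : ∀ c d : ZMod 4, chi (c + d) = chi c * chi d := by decide

lemma chi_zero : chi 0 = 1 := by decide

lemma chi_sum {ι : Type*} (s : Finset ι) (g : ι → ZMod 4) :
    chi (∑ i ∈ s, g i) = ∏ i ∈ s, chi (g i) := by
  induction s using Finset.cons_induction with
  | empty => simp [chi_zero]
  | cons i s hi ih => rw [Finset.sum_cons, Finset.prod_cons, chi_add, ih]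

def Good (z : GI) : Prop :=
  z = 0 ∨ ∃ k t e : ℕ, e ≤ 1 ∧ z = 2 ^ k * myI ^ t * (1 + myI) ^ e

lemma good_one : Good 1 := Or.inr ⟨0, 0, 0, by norm_num, by norm_num⟩

lemma good_mul {z w : GI} (hz : Good z) (hw : Good w) : Good (z * w) := by
  rcases hz with hz | ⟨k, t, e, he, hz⟩
  · left; rw [hz, zero_mul]
  rcases hw with hw | ⟨k', t', e', he', hw⟩
  · left; rw [hw, mul_zero]
  subst hz hw
  right
  interval_cases e <;> interval_cases e'
  · exact ⟨k + k', t + t', 0, by norm_num, by ring⟩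
  · exact ⟨k + k', t + t', 1, by norm_num, by ring⟩
  · exact ⟨k + k', t + t', 1, by norm_num, by ring⟩
  · refine ⟨k + k' + 1, t + t' + 1, 0, by norm_num, ?_⟩
    have h2 : (1 + myI) ^ 2 = 2 * myI := by decide
    calc 2 ^ k * myI ^ t * (1 + myI) ^ 1 * (2 ^ k' * myI ^ t' * (1 + myI) ^ 1)
        = 2 ^ k * 2 ^ k' * (myI ^ t * myI ^ t') * (1 + myI) ^ 2 := by ring
      _ = 2 ^ (k + k' + 1) * myI ^ (t + t' + 1) * (1 + myI) ^ 0 := by rw [h2]; ring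

lemma good_factor (c : ZMod 4) : Good (1 + chi c) := by
  fin_cases c
  · exact Or.inr ⟨1, 0, 0, by norm_num, by decide⟩
  · exact Or.inr ⟨0, 0, 1, by norm_num, by decide⟩
  · exact Or.inl (by decide)
  · exact Or.inr ⟨0, 3, 1, by norm_num, by decide⟩

lemma pow2_re_im (k : ℕ) (u : GI) :
    ((2:GI) ^ k * u).re = 2 ^ k * u.re ∧ ((2:GI) ^ k * u).im = 2 ^ k * u.im := by
  have h : ((2:GI) ^ k) = ((2 ^ k : ℕ) : GI) := by push_cast; ring
  rw [h, Zsqrtd.re_mul, Zsqrtd.im_mul, Zsqrtd.re_natCast, Zsqrtd.im_natCast]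
  constructor <;> push_cast <;> ring

lemma abs_pow2_case {r : ℤ} (k : ℕ) (hr : r = 0 ∨ r = 1 ∨ r = -1) :
    |(2:ℤ) ^ k * r| = 0 ∨ ∃ m : ℕ, |(2:ℤ) ^ k * r| = 2 ^ m := by
  rcases hr with h | h | h <;> subst h
  · left; simp
  · right; exact ⟨k, by rw [mul_one, abs_of_nonneg (by positivity)]⟩
  · right; refine ⟨k, ?_⟩
    rw [show (2:ℤ)^k * (-1) = -(2^k) from by ring, abs_neg, abs_of_nonneg (by positivity)]

lemma good_re_im {z : GI} (h : Good z) :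
    (|z.re| = 0 ∨ ∃ k : ℕ, |z.re| = 2 ^ k) ∧
      (|z.im| = 0 ∨ ∃ k : ℕ, |z.im| = 2 ^ k) := by
  rcases h with h | ⟨k, t, e, he, h⟩
  · subst h; simp
  have hI4 : myI ^ 4 = 1 := by decide
  have ht : myI ^ t = myI ^ (t % 4) := by
    conv_lhs => rw [← Nat.div_add_mod t 4]
    rw [pow_add, pow_mul, hI4, one_pow, one_mul]
  set u : GI := myI ^ (t % 4) * (1 + myI) ^ e with hu
  have hz : z = 2 ^ k * u := by rw [h, ht]; ring
  have h4 : t % 4 < 4 := Nat.mod_lt _ (by norm_num)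
  have hure : (u.re = 0 ∨ u.re = 1 ∨ u.re = -1) ∧ (u.im = 0 ∨ u.im = 1 ∨ u.im = -1) := by
    rw [hu]
    interval_cases h' : (t % 4) <;> interval_cases e <;> exact (by decide)
  rw [hz, (pow2_re_im k u).1, (pow2_re_im k u).2]
  exact ⟨abs_pow2_case k hure.1, abs_pow2_case k hure.2⟩

end Stmt0Aux

open Stmt0Aux in
theorem stmt_0 (n : ℕ) (a : Fin n → ZMod 4)
    (f : (Fin n → Fin 2) → ZMod 4)
    (hf : ∀ x, f x = ∑ i, a i * ((x i : ℕ) : ZMod 4)) :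
    ((|(Ncount n f 0 : ℤ) - (Ncount n f 2 : ℤ)| = 0 ∨
        ∃ k : ℕ, |(Ncount n f 0 : ℤ) - (Ncount n f 2 : ℤ)| = 2 ^ k) ∧
      (|(Ncount n f 1 : ℤ) - (Ncount n f 3 : ℤ)| = 0 ∨
        ∃ k : ℕ, |(Ncount n f 1 : ℤ) - (Ncount n f 3 : ℤ)| = 2 ^ k)) := by
  set S : GI := ∑ x : Fin n → Fin 2, chi (f x) with hSdef
  -- S as a product
  have hprod : S = ∏ i, (1 + chi (a i)) := by
    rw [hSdef]
    calc ∑ x : Fin n → Fin 2, chi (f x)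
        = ∑ x : Fin n → Fin 2, ∏ i, chi (a i * ((x i : ℕ) : ZMod 4)) := by
          exact Finset.sum_congr rfl fun x _ => by rw [hf, chi_sum]
      _ = ∏ i, ∑ b : Fin 2, chi (a i * ((b : ℕ) : ZMod 4)) := by
          rw [Finset.prod_univ_sum, Fintype.piFinset_univ]
      _ = ∏ i, (1 + chi (a i)) := by
          refine Finset.prod_congr rfl fun i _ => ?_
          rw [Fin.sum_univ_two]
          norm_num [chi_zero]
  have hgood : Good S := by
    rw [hprod]
    exact Finset.prod_induction _ Good (fun _ _ => good_mul) good_one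
      (fun i _ => good_factor (a i))
  -- S fiberwise
  have hfib : S = ∑ c : ZMod 4, (Ncount n f c) • chi c := by
    rw [hSdef, ← Finset.sum_fiberwise univ f (fun x => chi (f x))]
    refine Finset.sum_congr rfl fun c _ => ?_
    rw [Finset.sum_congr rfl (fun x hx => by
      rw [(Finset.mem_filter.mp hx).2]), Finset.sum_const]
    rfl
  have hexp : ∀ g : ZMod 4 → GI, ∑ c : ZMod 4, g c = g 0 + g 1 + g 2 + g 3 := by
    intro g
    rw [show (univ : Finset (ZMod 4)) = {0,1,2,3} from by decide]
    rw [show ({0,1,2,3} : Finset (ZMod 4)) = insert 0 (insert 1 (insert 2 {3})) from rfl]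
    rw [Finset.sum_insert (by decide), Finset.sum_insert (by decide),
        Finset.sum_insert (by decide), Finset.sum_singleton]
    ring
  rw [hexp] at hfib
  have h0 : chi 0 = ⟨1, 0⟩ := by decide
  have h1 : chi 1 = ⟨0, 1⟩ := by decide
  have h2 : chi 2 = ⟨-1, 0⟩ := by decide
  have h3 : chi 3 = ⟨0, -1⟩ := by decide
  have hre : S.re = (Ncount n f 0 : ℤ) - (Ncount n f 2 : ℤ) := by
    rw [hfib]
    simp [h0, h1, h2, h3, nsmul_eq_mul, Zsqrtd.re_add, Zsqrtd.re_mul, Zsqrtd.im_mul,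
      Zsqrtd.re_natCast, Zsqrtd.im_natCast]
    ring
  have him : S.im = (Ncount n f 1 : ℤ) - (Ncount n f 3 : ℤ) := by
    rw [hfib]
    simp [h0, h1, h2, h3, nsmul_eq_mul, Zsqrtd.im_add, Zsqrtd.re_mul, Zsqrtd.im_mul,
      Zsqrtd.re_natCast, Zsqrtd.im_natCast]
    ring
  have := good_re_im hgood
  rw [hre, him] at this
  exact this
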